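/- Let (Ω, 𝓕, μ) be a probability space and T : Ω → Ω an invertible bimeasurable measure-preserving transformation. Let 𝓒 be a sub-σ-algebra of 𝓕 with T^{-1}𝓒 = 𝓒 (i.e. A ∈ 𝓒 if and only if T^{-1}A ∈ 𝓒), let g : Ω → ℝ be bounded and measurable with ∫ g dμ = 0, and suppose the family of σ-algebras {σ(g∘T^j) : j ∈ ℤ} ∪ {𝓒} is independent. Let h : Ω → ℝ be bounded and 𝓒-measurable and set f = g·h. Then for every k ∈ ℤ, E(f∘T^k | σ(f∘T^j : j ∈ ℤ, j ≠ k)) = 0 μ-almost surely; in particular (f∘T^k)_{k≥0} is a strong martingale difference sequence. -/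

import Mathlib

open MeasureTheory ProbabilityTheory Set

/-- The `k`-th iterate (for `k : ℤ`) of an invertible transformation. -/
noncomputable def iterZ {α : Type*} (e : α ≃ α) : ℤ → α → α
  | Int.ofNat n => (⇑e)^[n]
  | Int.negSucc n => (⇑e.symm)^[n + 1]

/-- If `𝓒` is a `T`-invariant sub-σ-algebra, `g` is a bounded centered random variable such
that the family `{σ(g∘T^j) : j ∈ ℤ} ∪ {𝓒}` is independent, and `h` is bounded and
`𝓒`-measurable, then `f = g·h` satisfies `E(f∘T^k | σ(f∘T^j : j ≠ k)) = 0` a.s. for every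
`k ∈ ℤ`; in particular `(f∘T^k)_{k≥0}` is a strong martingale difference sequence. -/
theorem stmt8 {Ω : Type*} [mΩ : MeasurableSpace Ω] (μ : Measure Ω) [IsProbabilityMeasure μ]
    (T : Ω ≃ Ω) (hTmeas : Measurable (⇑T)) (hTmeas' : Measurable (⇑T.symm))
    (hT : MeasurePreserving (⇑T) μ μ)
    (C : MeasurableSpace Ω) (hC : C ≤ mΩ)
    (hCinv : ∀ A : Set Ω, MeasurableSet[C] A ↔ MeasurableSet[C] ((⇑T) ⁻¹' A))
    (g : Ω → ℝ) (hg : Measurable[mΩ] g) (hgbd : ∃ M : ℝ, ∀ ω, |g ω| ≤ M)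
    (hgcen : ∫ ω, g ω ∂μ = 0)
    (hindep : iIndep (fun o : Option ℤ =>
      o.elim C fun j => MeasurableSpace.comap (fun ω => g (iterZ T j ω))
        Real.measurableSpace) μ)
    (h : Ω → ℝ) (hh : Measurable[C] h) (hhbd : ∃ M : ℝ, ∀ ω, |h ω| ≤ M)
    (f : Ω → ℝ) (hf : ∀ ω, f ω = g ω * h ω) :
    (∀ k : ℤ,
      μ[(fun ω => f (iterZ T k ω)) |
        ⨆ j ∈ {j : ℤ | j ≠ k}, MeasurableSpace.comap (fun ω => f (iterZ T j ω))
          Real.measurableSpace] =ᵐ[μ] 0) ∧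
    (∀ k : ℕ,
      μ[(fun ω => f ((⇑T)^[k] ω)) |
        ⨆ j ∈ {j : ℕ | j ≠ k}, MeasurableSpace.comap (fun ω => f ((⇑T)^[j] ω))
          Real.measurableSpace] =ᵐ[μ] 0) := by
  letI : MeasurableSpace Ω := mΩ
  obtain ⟨Mg, hMg⟩ := hgbd
  obtain ⟨Mh, hMh⟩ := hhbd
  have hMg' : ∀ ω, |g ω| ≤ |Mg| := fun ω => (hMg ω).trans (le_abs_self _)
  have hMh' : ∀ ω, |h ω| ≤ |Mh| := fun ω => (hMh ω).trans (le_abs_self _)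
  have hTsymm : @MeasurePreserving Ω Ω mΩ mΩ (⇑T.symm) μ μ := hT.symm (@MeasurableEquiv.mk Ω Ω mΩ mΩ T hTmeas hTmeas')
  -- measure preservation & measurability of iterates
  have hIter : ∀ j : ℤ, @MeasurePreserving Ω Ω mΩ mΩ (iterZ T j) μ μ := by
    intro j
    cases j with
    | ofNat n => exact hT.iterate n
    | negSucc n => exact hTsymm.iterate (n + 1)
  have hIterMeas : ∀ j : ℤ, @Measurable Ω Ω mΩ mΩ (iterZ T j) := by
    intro j
    cases j with
    | ofNat n => exact hTmeas.iterate n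
    | negSucc n => exact hTmeas'.iterate (n + 1)
  -- C-measurability of iterates
  have hTC : @Measurable Ω Ω C C (⇑T) := fun A hA => (hCinv A).mp hA
  have hTC' : @Measurable Ω Ω C C (⇑T.symm) := by
    intro A hA
    refine (hCinv _).mpr ?_
    have hEq : (⇑T) ⁻¹' ((⇑T.symm) ⁻¹' A) = A := by ext ω; simp
    rwa [hEq]
  have hIterC : ∀ j : ℤ, @Measurable Ω Ω C C (iterZ T j) := by
    intro j
    cases j with
    | ofNat n => exact hTC.iterate n
    | negSucc n => exact hTC'.iterate (n + 1)
  -- the independent family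
  set F : Option ℤ → MeasurableSpace Ω := fun o =>
    o.elim C fun j => MeasurableSpace.comap (fun ω => g (iterZ T j ω))
      Real.measurableSpace with hF
  have hF_le : ∀ o, F o ≤ mΩ := by
    rintro (_ | j)
    · exact hC
    · exact Measurable.comap_le (Measurable.comp hg (hIterMeas j))
  -- integrability helper
  have hint : ∀ (φ : Ω → ℝ), @Measurable Ω ℝ mΩ _ φ → ∀ M : ℝ, (∀ ω, |φ ω| ≤ M) →
      Integrable φ μ := by
    intro φ hφ M hM
    exact (integrable_const M).mono' hφ.aestronglyMeasurable
      (ae_of_all _ fun ω => by simpa [Real.norm_eq_abs] using hM ω)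
  have hfeq : f = fun ω => g ω * h ω := funext hf
  have hhm : @Measurable Ω ℝ mΩ _ h := hh.mono hC le_rfl
  have hfm : @Measurable Ω ℝ mΩ _ f := by rw [hfeq]; exact hg.mul hhm
  have hfbd : ∀ ω, |f ω| ≤ |Mg| * |Mh| := by
    intro ω
    rw [hf ω, abs_mul]
    exact mul_le_mul (hMg' ω) (hMh' ω) (abs_nonneg _) (abs_nonneg _)
  -- key claim
  have key : ∀ k : ℤ, ∀ m' : MeasurableSpace Ω,
      m' ≤ (⨆ o ∈ ({some k}ᶜ : Set (Option ℤ)), F o) →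
      μ[(fun ω => f (iterZ T k ω)) | m'] =ᵐ[μ] 0 := by
    intro k m' hm'
    set G : MeasurableSpace Ω := ⨆ o ∈ ({some k}ᶜ : Set (Option ℤ)), F o with hG
    letI : MeasurableSpace Ω := mΩ
    have hGle : G ≤ mΩ := iSup₂_le fun o _ => hF_le o
    have hCleG : C ≤ G := by
      have : F none ≤ G := le_biSup F (by simp)
      exact this
    have hm'le : m' ≤ mΩ := hm'.trans hGle
    -- independence of σ(g ∘ T^k) from G
    have hIndepk : Indep (F (some k)) G μ := by
      have h1 := indep_biSup_compl hF_le hindep {some k}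
      have h2 : F (some k) ≤ ⨆ o ∈ ({some k} : Set (Option ℤ)), F o := le_biSup F rfl
      exact indep_of_indep_of_le_left h1 h2
    -- σ-finiteness of trims
    haveI : SigmaFinite (μ.trim hGle) := by infer_instance
    haveI : SigmaFinite (μ.trim hm'le) := by infer_instance
    -- conditional expectation of g ∘ T^k given G is its mean, i.e. 0
    have hgk_sm : StronglyMeasurable[F (some k)] (fun ω => g (iterZ T k ω)) := by
      have : Measurable[F (some k)] (fun ω => g (iterZ T k ω)) :=
        Measurable.of_comap_le le_rfl
      exact this.stronglyMeasurable
    have hgk_int : Integrable (fun ω => g (iterZ T k ω)) μ :=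
      hint _ (Measurable.comp hg (hIterMeas k)) (|Mg|) (fun ω => hMg' _)
    have hgk_mean : ∫ ω, g (iterZ T k ω) ∂μ = 0 := by
      rw [← integral_map (Measurable.aemeasurable (hIterMeas k)) hg.aestronglyMeasurable,
        (hIter k).map_eq]
      exact hgcen
    have hcond_g : μ[(fun ω => g (iterZ T k ω)) | G] =ᵐ[μ] fun _ => (0 : ℝ) := by
      have := condExp_indep_eq (hF_le (some k)) hGle hgk_sm hIndepk
      simpa [hgk_mean] using this
    -- h ∘ T^k is G-measurable
    have hhk_sm : StronglyMeasurable[G] (fun ω => h (iterZ T k ω)) :=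
      ((hh.comp (hIterC k)).mono hCleG le_rfl).stronglyMeasurable
    -- pull-out
    have hfk_eq : (fun ω => f (iterZ T k ω))
        = (fun ω => h (iterZ T k ω)) * (fun ω => g (iterZ T k ω)) := by
      funext ω; simp [hf, mul_comm]
    have hprod_int : Integrable ((fun ω => h (iterZ T k ω)) * fun ω => g (iterZ T k ω)) μ := by
      rw [← hfk_eq]
      exact hint _ (Measurable.comp hfm (hIterMeas k)) (|Mg| * |Mh|) (fun ω => hfbd _)
    have hpull := condExp_mul_of_stronglyMeasurable_left hhk_sm hprod_int hgk_int
    have hzeroG : μ[(fun ω => f (iterZ T k ω)) | G] =ᵐ[μ] 0 := by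
      rw [hfk_eq]
      refine hpull.trans ?_
      filter_upwards [hcond_g] with ω hω
      simp [hω]
    -- tower property
    have htower := condExp_condExp_of_le hm' hGle
      (f := fun ω => f (iterZ T k ω)) (μ := μ)
    calc μ[(fun ω => f (iterZ T k ω)) | m']
        =ᵐ[μ] μ[μ[(fun ω => f (iterZ T k ω)) | G] | m'] := htower.symm
      _ =ᵐ[μ] μ[(0 : Ω → ℝ) | m'] := condExp_congr_ae hzeroG
      _ =ᵐ[μ] 0 := by rw [condExp_zero]
  constructor
  · intro k
    refine key k _ (iSup₂_le fun j hj => ?_)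
    refine Measurable.comap_le ?_
    have hgj : Measurable[F (some j)] (fun ω => g (iterZ T j ω)) :=
      Measurable.of_comap_le le_rfl
    have hle_j : F (some j) ≤ ⨆ o ∈ ({some k}ᶜ : Set (Option ℤ)), F o :=
      le_biSup F (by simpa using hj)
    have hCle : C ≤ ⨆ o ∈ ({some k}ᶜ : Set (Option ℤ)), F o :=
      le_biSup F (i := none) (by simp)
    have : (fun ω => f (iterZ T j ω))
        = fun ω => g (iterZ T j ω) * h (iterZ T j ω) := by funext ω; exact hf _
    rw [this]
    exact (hgj.mono hle_j le_rfl).mul ((hh.comp (hIterC j)).mono hCle le_rfl)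
  · intro k
    have := key (k : ℤ) (⨆ j ∈ {j : ℕ | j ≠ k}, MeasurableSpace.comap
        (fun ω => f ((⇑T)^[j] ω)) Real.measurableSpace) ?_
    · exact this
    refine iSup₂_le fun j hj => ?_
    refine Measurable.comap_le ?_
    have hj' : some (j : ℤ) ∈ ({some (k : ℤ)}ᶜ : Set (Option ℤ)) := by
      simp only [mem_compl_iff, mem_singleton_iff, Option.some.injEq]
      exact_mod_cast hj
    have hgj : Measurable[F (some (j : ℤ))] (fun ω => g (iterZ T (j : ℤ) ω)) :=
      Measurable.of_comap_le le_rfl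
    have hle_j : F (some (j : ℤ)) ≤ ⨆ o ∈ ({some (k : ℤ)}ᶜ : Set (Option ℤ)), F o :=
      le_biSup F hj'
    have hCle : C ≤ ⨆ o ∈ ({some (k : ℤ)}ᶜ : Set (Option ℤ)), F o :=
      le_biSup F (i := none) (by simp)
    have heq : (fun ω => f ((⇑T)^[j] ω))
        = fun ω => g (iterZ T (j : ℤ) ω) * h (iterZ T (j : ℤ) ω) := by
      funext ω; exact hf _
    rw [heq]
    exact (hgj.mono hle_j le_rfl).mul ((hh.comp (hIterC (j : ℤ))).mono hCle le_rfl)
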